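/- Fix integers n ≥ 4 and l with 1 ≤ l and l + 2 ≤ n, and let Δp be as defined below. Let x < y < z be real numbers, let v₁ ≤ v₂ ≤ … ≤ v_n be real numbers with v_l = v_{l+1} = v_{l+2} = y and x ≤ v_i ≤ z for every i, and let f_x, f_z : ℝ → ℝ each be concave on [0,∞) and nonincreasing on [0,∞). Then at least one of the following holds: ∑_{i=1}^{n} Δp(i)·f_x(|x − v_i|) ≥ 0, or ∑_{i=1}^{n} Δp(i)·f_z(|z − v_i|) ≥ 0. -/

import Mathlib

open Finset

def ELA.Hs (M K : ℕ) : ℕ := ∑ k ∈ Finset.range K, M.choose k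

namespace ELA

lemma Hs_succ (M K : ℕ) : Hs (M+1) (K+1) = Hs M K + Hs M (K+1) := by
  unfold Hs
  rw [Finset.sum_range_succ' (fun k => (M+1).choose k) K,
      Finset.sum_range_succ' (fun k => M.choose k) K]
  simp only [Nat.choose_succ_succ, Nat.succ_eq_add_one, Nat.choose_zero_right,
    Finset.sum_add_distrib]
  omega

lemma Hs_mono (M : ℕ) {K K' : ℕ} (h : K ≤ K') : Hs M K ≤ Hs M K' :=
  Finset.sum_le_sum_of_subset (Finset.range_subset_range.mpr h)

lemma Hs_step_le (M K : ℕ) : Hs (M+1) K ≤ 2 * Hs M K := by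
  rcases K with _ | K
  · simp [Hs]
  · show Hs (M+1) (K+1) ≤ 2 * Hs M (K+1)
    rw [Hs_succ]
    have : Hs M K ≤ Hs M (K+1) := Hs_mono M (by omega)
    omega

lemma Hs_le_step (M K : ℕ) : 2 * Hs M K ≤ Hs (M+1) (K+1) := by
  rw [Hs_succ]
  have : Hs M K ≤ Hs M (K+1) := Hs_mono M (by omega)
  omega

lemma Hs3_le (M K : ℕ) : Hs (M+3) K ≤ 8 * Hs M K := by
  have h1 : Hs (M+3) K ≤ 2 * Hs (M+2) K := Hs_step_le (M+2) K
  have h2 : Hs (M+2) K ≤ 2 * Hs (M+1) K := Hs_step_le (M+1) K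
  have h3 : Hs (M+1) K ≤ 2 * Hs M K := Hs_step_le M K
  omega

lemma le_Hs3 (M K : ℕ) : 8 * Hs M K ≤ Hs (M+3) (K+3) := by
  have h1 : 2 * Hs M K ≤ Hs (M+1) (K+1) := Hs_le_step M K
  have h2 : 2 * Hs (M+1) (K+1) ≤ Hs (M+2) (K+2) := Hs_le_step (M+1) (K+1)
  have h3 : 2 * Hs (M+2) (K+2) ≤ Hs (M+3) (K+3) := Hs_le_step (M+2) (K+2)
  omega

lemma Hs_total (M : ℕ) : Hs M (M+1) = 2 ^ M := Nat.sum_range_choose M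

lemma concave_cross {f : ℝ → ℝ} (hf : ConcaveOn ℝ (Set.Ici 0) f) {a b c d : ℝ}
    (ha : 0 ≤ a) (hab : a ≤ b) (hbc : b ≤ c) (hcd : c ≤ d) :
    (f d - f c) * (b - a) ≤ (f b - f a) * (d - c) := by
  rcases eq_or_lt_of_le hab with h1 | h1
  · rw [← h1]; simp
  rcases eq_or_lt_of_le hcd with h2 | h2
  · rw [← h2]; simp
  have hb : (0:ℝ) ≤ b := ha.trans hab
  have hc : (0:ℝ) ≤ c := hb.trans hbc
  have hd : (0:ℝ) ≤ d := hc.trans hcd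
  rcases eq_or_lt_of_le hbc with h3 | h3
  · subst h3
    have := hf.slope_anti_adjacent (Set.mem_Ici.mpr ha) (Set.mem_Ici.mpr hd) h1 h2
    rw [div_le_div_iff₀ (by linarith) (by linarith)] at this
    linarith
  · have s1 := hf.slope_anti_adjacent (Set.mem_Ici.mpr ha) (Set.mem_Ici.mpr hc) h1 h3
    have s2 := hf.slope_anti_adjacent (Set.mem_Ici.mpr hb) (Set.mem_Ici.mpr hd) h3 h2
    have s3 := s2.trans s1
    rw [div_le_div_iff₀ (by linarith) (by linarith)] at s3
    linarith

end ELA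

theorem existence_lemma_partA
    (n l : ℕ) (hn : 4 ≤ n) (hl : 1 ≤ l) (hln : l + 2 ≤ n)
    (Δp : ℕ → ℝ)
    (hΔp₁ : ∀ i : ℕ, 1 ≤ i → i ≤ l - 1 →
      Δp i = (1 / 2 : ℝ) ^ (n - 1) * ((n - 1).choose (i - 1) : ℝ)
           - (1 / 2 : ℝ) ^ (n - 4) * ((n - 4).choose (i - 1) : ℝ))
    (hΔp₂ : ∀ i : ℕ, l ≤ i → i ≤ l + 2 →
      Δp i = (1 / 2 : ℝ) ^ (n - 1) * ((n - 1).choose (i - 1) : ℝ))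
    (hΔp₃ : ∀ i : ℕ, l + 3 ≤ i → i ≤ n →
      Δp i = (1 / 2 : ℝ) ^ (n - 1) * ((n - 1).choose (i - 1) : ℝ)
           - (1 / 2 : ℝ) ^ (n - 4) * ((n - 4).choose (i - 4) : ℝ))
    (x y z : ℝ) (hxy : x < y) (hyz : y < z)
    (v : ℕ → ℝ)
    (hvmono : ∀ i j : ℕ, 1 ≤ i → i ≤ j → j ≤ n → v i ≤ v j)
    (hvl : v l = y) (hvl1 : v (l + 1) = y) (hvl2 : v (l + 2) = y)
    (hvrange : ∀ i : ℕ, 1 ≤ i → i ≤ n → x ≤ v i ∧ v i ≤ z)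
    (fx fz : ℝ → ℝ)
    (hfx_conc : ConcaveOn ℝ (Set.Ici (0 : ℝ)) fx)
    (hfx_anti : AntitoneOn fx (Set.Ici (0 : ℝ)))
    (hfz_conc : ConcaveOn ℝ (Set.Ici (0 : ℝ)) fz)
    (hfz_anti : AntitoneOn fz (Set.Ici (0 : ℝ))) :
    0 ≤ ∑ i ∈ Finset.Icc 1 n, Δp i * fx |x - v i| ∨
    0 ≤ ∑ i ∈ Finset.Icc 1 n, Δp i * fz |z - v i| := by
  obtain ⟨N, rfl⟩ : ∃ N, n = N + 4 := ⟨n - 4, by omega⟩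
  clear hn
  -- normalize the Δp hypotheses
  have hD1 : ∀ i : ℕ, 1 ≤ i → i ≤ l - 1 →
      Δp i = (1/2 : ℝ) ^ (N+3) * ((N+3).choose (i-1) : ℝ)
           - (1/2 : ℝ) ^ N * (N.choose (i-1) : ℝ) := by
    intro i h1 h2
    rw [hΔp₁ i h1 h2]
    norm_num [show N+4-1 = N+3 from rfl, show N+4-4 = N from rfl]
  have hD2 : ∀ i : ℕ, l ≤ i → i ≤ l + 2 →
      Δp i = (1/2 : ℝ) ^ (N+3) * ((N+3).choose (i-1) : ℝ) := by
    intro i h1 h2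
    rw [hΔp₂ i h1 h2]
    norm_num [show N+4-1 = N+3 from rfl]
  have hD3 : ∀ i : ℕ, l + 3 ≤ i → i ≤ N+4 →
      Δp i = (1/2 : ℝ) ^ (N+3) * ((N+3).choose (i-1) : ℝ)
           - (1/2 : ℝ) ^ N * (N.choose (i-4) : ℝ) := by
    intro i h1 h2
    rw [hΔp₃ i h1 h2]
    norm_num [show N+4-1 = N+3 from rfl, show N+4-4 = N from rfl]
  -- the partial-sum formulas
  have hSform1 : ∀ j : ℕ, j ≤ l - 1 →
      (∑ i ∈ Finset.range j, Δp (1+i))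
        = (1/2 : ℝ)^(N+3) * (ELA.Hs (N+3) j : ℝ) - (1/2 : ℝ)^N * (ELA.Hs N j : ℝ) := by
    intro j hj
    have step : ∀ i ∈ Finset.range j, Δp (1+i)
        = (1/2 : ℝ)^(N+3) * ((N+3).choose i : ℝ) - (1/2 : ℝ)^N * (N.choose i : ℝ) := by
      intro i hi
      have hi' := Finset.mem_range.mp hi
      rw [hD1 (1+i) (by omega) (by omega)]
      norm_num [show 1+i-1 = i from by omega]
    rw [Finset.sum_congr rfl step, Finset.sum_sub_distrib, ← Finset.mul_sum, ← Finset.mul_sum]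
    unfold ELA.Hs
    push_cast
    ring
  have hSform2 : ∀ j : ℕ, l + 2 ≤ j → j ≤ N+4 →
      (∑ i ∈ Finset.range j, Δp (1+i))
        = (1/2 : ℝ)^(N+3) * (ELA.Hs (N+3) j : ℝ) - (1/2 : ℝ)^N * (ELA.Hs N (j-3) : ℝ) := by
    intro j h1 h2
    have e0 : Finset.range j = Finset.Ico 0 j := by rw [Finset.range_eq_Ico]
    rw [e0, ← Finset.sum_Ico_consecutive (fun i => Δp (1+i))
          (show (0:ℕ) ≤ l+2 by omega) (show l+2 ≤ j from h1),
        ← Finset.sum_Ico_consecutive (fun i => Δp (1+i))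
          (show (0:ℕ) ≤ l-1 by omega) (show l-1 ≤ l+2 by omega)]
    have p1 : ∀ i ∈ Finset.Ico 0 (l-1), Δp (1+i)
        = (1/2 : ℝ)^(N+3) * ((N+3).choose i : ℝ) - (1/2 : ℝ)^N * (N.choose i : ℝ) := by
      intro i hi
      have hi' := Finset.mem_Ico.mp hi
      rw [hD1 (1+i) (by omega) (by omega)]
      norm_num [show 1+i-1 = i from by omega]
    have p2 : ∀ i ∈ Finset.Ico (l-1) (l+2), Δp (1+i)
        = (1/2 : ℝ)^(N+3) * ((N+3).choose i : ℝ) := by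
      intro i hi
      have hi' := Finset.mem_Ico.mp hi
      rw [hD2 (1+i) (by omega) (by omega)]
      norm_num [show 1+i-1 = i from by omega]
    have p3 : ∀ i ∈ Finset.Ico (l+2) j, Δp (1+i)
        = (1/2 : ℝ)^(N+3) * ((N+3).choose i : ℝ) - (1/2 : ℝ)^N * (N.choose (i-3) : ℝ) := by
      intro i hi
      have hi' := Finset.mem_Ico.mp hi
      rw [hD3 (1+i) (by omega) (by omega)]
      norm_num [show 1+i-1 = i from by omega, show 1+i-4 = i-3 from by omega]
    rw [Finset.sum_congr rfl p1, Finset.sum_congr rfl p2, Finset.sum_congr rfl p3]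
    -- the choose(N) part of p3, reindexed
    have reindex : (∑ i ∈ Finset.Ico (l+2) j, (N.choose (i-3) : ℝ))
        = ∑ k ∈ Finset.Ico (l-1) (j-3), (N.choose k : ℝ) := by
      rw [Finset.sum_Ico_eq_sum_range, Finset.sum_Ico_eq_sum_range,
          show j - (l+2) = j-3 - (l-1) from by omega]
      apply Finset.sum_congr rfl
      intro i _
      congr 2
      omega
    have joinN : (∑ i ∈ Finset.Ico 0 (l-1), (N.choose i : ℝ))
          + (∑ k ∈ Finset.Ico (l-1) (j-3), (N.choose k : ℝ))
        = (ELA.Hs N (j-3) : ℝ) := by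
      rw [Finset.sum_Ico_consecutive (fun i => (N.choose i : ℝ))
            (show (0:ℕ) ≤ l-1 by omega) (show l-1 ≤ j-3 by omega)]
      unfold ELA.Hs
      push_cast [Finset.range_eq_Ico]
      ring
    have joinB : (∑ i ∈ Finset.Ico 0 (l-1), ((N+3).choose i : ℝ))
          + (∑ i ∈ Finset.Ico (l-1) (l+2), ((N+3).choose i : ℝ))
          + (∑ i ∈ Finset.Ico (l+2) j, ((N+3).choose i : ℝ))
        = (ELA.Hs (N+3) j : ℝ) := by
      rw [Finset.sum_Ico_consecutive (fun i => ((N+3).choose i : ℝ))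
            (show (0:ℕ) ≤ l-1 by omega) (show l-1 ≤ l+2 by omega),
          Finset.sum_Ico_consecutive (fun i => ((N+3).choose i : ℝ))
            (show (0:ℕ) ≤ l+2 by omega) (show l+2 ≤ j from h1)]
      unfold ELA.Hs
      push_cast [Finset.range_eq_Ico]
      ring
    rw [Finset.sum_sub_distrib, Finset.sum_sub_distrib, ← Finset.mul_sum, ← Finset.mul_sum,
        ← Finset.mul_sum, ← Finset.mul_sum, ← Finset.mul_sum]
    rw [← joinB, ← joinN, ← reindex]
    ring
  -- helper: (1/2)^N = 8 * (1/2)^(N+3)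
  have hce : (1/2 : ℝ)^N = 8 * (1/2 : ℝ)^(N+3) := by
    rw [pow_add]; ring
  have hcpos : (0:ℝ) < (1/2 : ℝ)^(N+3) := by positivity
  -- sign facts
  have hneg : ∀ j : ℕ, j ≤ l - 1 → (∑ i ∈ Finset.range j, Δp (1+i)) ≤ 0 := by
    intro j hj
    rw [hSform1 j hj, hce]
    have hcomb : (ELA.Hs (N+3) j : ℝ) ≤ 8 * (ELA.Hs N j : ℝ) := by
      exact_mod_cast ELA.Hs3_le N j
    have := mul_le_mul_of_nonneg_left hcomb hcpos.le
    linarith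
  have hpos : ∀ j : ℕ, l + 2 ≤ j → j ≤ N + 4 →
      0 ≤ (∑ i ∈ Finset.range j, Δp (1+i)) := by
    intro j h1 h2
    rw [hSform2 j h1 h2, hce]
    have hcomb : 8 * (ELA.Hs N (j-3) : ℝ) ≤ (ELA.Hs (N+3) j : ℝ) := by
      have := ELA.le_Hs3 N (j-3)
      rw [show j-3+3 = j from by omega] at this
      exact_mod_cast this
    have := mul_le_mul_of_nonneg_left hcomb hcpos.le
    linarith
  have hSn : (∑ i ∈ Finset.range (N+4), Δp (1+i)) = 0 := by
    rw [hSform2 (N+4) (by omega) (by omega)]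
    have t1 : (ELA.Hs (N+3) (N+4) : ℝ) = 2^(N+3) := by exact_mod_cast ELA.Hs_total (N+3)
    have t2 : (ELA.Hs N (N+4-3) : ℝ) = 2^N := by exact_mod_cast ELA.Hs_total N
    rw [t1, t2]
    have u1 : (1/2 : ℝ)^(N+3) * 2^(N+3) = 1 := by
      rw [div_pow, one_pow]; field_simp
    have u2 : (1/2 : ℝ)^N * 2^N = 1 := by
      rw [div_pow, one_pow]; field_simp
    linarith
  -- Abel summation
  have habel : ∀ u : ℕ → ℝ,
      ∑ i ∈ Finset.Icc 1 (N+4), Δp i * u i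
        = ∑ j ∈ Finset.Ico 1 (N+4), (u j - u (j+1)) * (∑ i ∈ Finset.range j, Δp (1+i)) := by
    intro u
    have h0 : Finset.Icc 1 (N+4) = Finset.Ico 1 (N+4+1) := (Finset.Ico_add_one_right_eq_Icc 1 (N+4)).symm
    rw [h0, Finset.sum_Ico_eq_sum_range, Finset.sum_Ico_eq_sum_range]
    simp only [Nat.add_sub_cancel]
    have hbp := Finset.sum_range_by_parts (fun i => u (1+i)) (fun i => Δp (1+i)) (N+4)
    simp only [smul_eq_mul] at hbp
    rw [hSn] at hbp
    rw [show (∑ k ∈ Finset.range (N+4), Δp (1+k) * u (1+k))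
          = ∑ i ∈ Finset.range (N+4), u (1+i) * Δp (1+i) from
        Finset.sum_congr rfl fun i _ => mul_comm _ _]
    rw [hbp, mul_zero, zero_sub, show N+4-1 = N+3 from rfl, ← Finset.sum_neg_distrib]
    apply Finset.sum_congr rfl
    intro i _
    rw [show (1:ℕ)+i+1 = 1+(i+1) from rfl, show (∑ j ∈ Finset.range (1+i), Δp (1+j))
          = ∑ j ∈ Finset.range (i+1), Δp (1+j) from by rw [Nat.add_comm 1 i]]
    ring
  -- basic facts about v
  have habs1 : ∀ i : ℕ, 1 ≤ i → i ≤ N+4 → |x - v i| = v i - x := by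
    intro i h1 h2
    rw [abs_sub_comm]
    exact abs_of_nonneg (by linarith [(hvrange i h1 h2).1])
  have habs2 : ∀ i : ℕ, 1 ≤ i → i ≤ N+4 → |z - v i| = z - v i := by
    intro i h1 h2
    exact abs_of_nonneg (by linarith [(hvrange i h1 h2).2])
  -- monotonicity of the two utility sequences
  have hdx : ∀ j : ℕ, 1 ≤ j → j + 1 ≤ N+4 → 0 ≤ fx |x - v j| - fx |x - v (j+1)| := by
    intro j h1 h2
    rw [habs1 j h1 (by omega), habs1 (j+1) (by omega) h2]
    have hm := hvmono j (j+1) h1 (by omega) h2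
    have r1 := (hvrange j h1 (by omega)).1
    have := hfx_anti (Set.mem_Ici.mpr (by linarith : (0:ℝ) ≤ v j - x))
      (Set.mem_Ici.mpr (by linarith : (0:ℝ) ≤ v (j+1) - x)) (by linarith)
    linarith
  have hdz : ∀ j : ℕ, 1 ≤ j → j + 1 ≤ N+4 → 0 ≤ fz |z - v (j+1)| - fz |z - v j| := by
    intro j h1 h2
    rw [habs2 j h1 (by omega), habs2 (j+1) (by omega) h2]
    have hm := hvmono j (j+1) h1 (by omega) h2
    have r2 := (hvrange (j+1) (by omega) h2).2
    have := hfz_anti (Set.mem_Ici.mpr (by linarith : (0:ℝ) ≤ z - v (j+1)))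
      (Set.mem_Ici.mpr (by linarith : (0:ℝ) ≤ z - v j)) (by linarith)
    linarith
  -- the cross inequality
  have hcross : ∀ j j' : ℕ, 1 ≤ j → j + 1 ≤ l → l + 2 ≤ j' → j' + 1 ≤ N+4 →
      (fx |x - v j| - fx |x - v (j+1)|) * (fz |z - v (j'+1)| - fz |z - v j'|)
        ≤ (fx |x - v j'| - fx |x - v (j'+1)|) * (fz |z - v (j+1)| - fz |z - v j|) := by
    intro j j' hj1 hj2 hj3 hj4
    have hdxj := hdx j hj1 (by omega)
    have hdxj' := hdx j' (by omega) hj4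
    have hdzj := hdz j hj1 (by omega)
    have hdzj' := hdz j' (by omega) hj4
    have hm1 := hvmono j (j+1) hj1 (by omega) (by omega)
    have hm2 := hvmono (j+1) j' (by omega) (by omega) (by omega)
    have hm3 := hvmono j' (j'+1) (by omega) (by omega) (by omega)
    rcases eq_or_lt_of_le hm1 with t1 | t1
    · rw [t1]; simp
    rcases eq_or_lt_of_le hm3 with t2 | t2
    · rw [t2]; simp
    have r1 := (hvrange j hj1 (by omega)).1
    have r2 := (hvrange (j'+1) (by omega) hj4).2
    rw [habs1 j hj1 (by omega), habs1 (j+1) (by omega) (by omega),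
        habs1 j' (by omega) (by omega), habs1 (j'+1) (by omega) hj4,
        habs2 j hj1 (by omega), habs2 (j+1) (by omega) (by omega),
        habs2 j' (by omega) (by omega), habs2 (j'+1) (by omega) hj4]
    rw [habs1 j hj1 (by omega), habs1 (j+1) (by omega) (by omega)] at hdxj
    rw [habs1 j' (by omega) (by omega), habs1 (j'+1) (by omega) hj4] at hdxj'
    rw [habs2 j hj1 (by omega), habs2 (j+1) (by omega) (by omega)] at hdzj
    rw [habs2 j' (by omega) (by omega), habs2 (j'+1) (by omega) hj4] at hdzj' 
    have c1 := ELA.concave_cross hfx_conc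
      (show (0:ℝ) ≤ v j - x by linarith)
      (show v j - x ≤ v (j+1) - x by linarith)
      (show v (j+1) - x ≤ v j' - x by linarith)
      (show v j' - x ≤ v (j'+1) - x by linarith)
    have c2 := ELA.concave_cross hfz_conc
      (show (0:ℝ) ≤ z - v (j'+1) by linarith)
      (show z - v (j'+1) ≤ z - v j' by linarith)
      (show z - v j' ≤ z - v (j+1) by linarith)
      (show z - v (j+1) ≤ z - v j by linarith)
    have c1' : (fx (v j - x) - fx (v (j+1) - x)) * (v (j'+1) - v j')
        ≤ (fx (v j' - x) - fx (v (j'+1) - x)) * (v (j+1) - v j) := by linear_combination c1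
    have c2' : (fz (z - v (j'+1)) - fz (z - v j')) * (v (j+1) - v j)
        ≤ (fz (z - v (j+1)) - fz (z - v j)) * (v (j'+1) - v j') := by linear_combination c2
    have key := mul_le_mul c1' c2'
      (mul_nonneg hdzj' (by linarith)) (mul_nonneg hdxj' (by linarith))
    have hprod : (0:ℝ) < (v (j+1) - v j) * (v (j'+1) - v j') := by
      apply mul_pos <;> linarith
    have final : (fx (v j - x) - fx (v (j+1) - x)) * (fz (z - v (j'+1)) - fz (z - v j'))
          * ((v (j+1) - v j) * (v (j'+1) - v j'))
        ≤ (fx (v j' - x) - fx (v (j'+1) - x)) * (fz (z - v (j+1)) - fz (z - v j))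
          * ((v (j+1) - v j) * (v (j'+1) - v j')) := by linear_combination key
    exact le_of_mul_le_mul_right final hprod
  -- Abel + split into the two relevant blocks
  have hsplit : ∀ u : ℕ → ℝ, u l = u (l+1) → u (l+1) = u (l+2) →
      ∑ i ∈ Finset.Icc 1 (N+4), Δp i * u i
        = (∑ j ∈ Finset.Ico 1 l, (u j - u (j+1)) * (∑ i ∈ Finset.range j, Δp (1+i)))
        + (∑ j ∈ Finset.Ico (l+2) (N+4), (u j - u (j+1)) * (∑ i ∈ Finset.range j, Δp (1+i))) := by
    intro u hu1 hu2
    rw [habel u,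
        ← Finset.sum_Ico_consecutive (fun j => (u j - u (j+1)) * (∑ i ∈ Finset.range j, Δp (1+i)))
          (show 1 ≤ l+2 by omega) (show l+2 ≤ N+4 by omega),
        ← Finset.sum_Ico_consecutive (fun j => (u j - u (j+1)) * (∑ i ∈ Finset.range j, Δp (1+i)))
          (show 1 ≤ l by omega) (show l ≤ l+2 by omega)]
    have hmid : (∑ j ∈ Finset.Ico l (l+2),
        (u j - u (j+1)) * (∑ i ∈ Finset.range j, Δp (1+i))) = 0 := by
      apply Finset.sum_eq_zero
      intro j hj
      have hj' := Finset.mem_Ico.mp hj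
      have : j = l ∨ j = l + 1 := by omega
      rcases this with rfl | rfl
      · rw [hu1]; ring
      · rw [hu2]; ring
    rw [hmid, add_zero]
  -- set up the four block sums
  set ux : ℕ → ℝ := fun i => fx |x - v i| with hux
  set uz : ℕ → ℝ := fun i => fz |z - v i| with huz
  have hux_eq : ux l = ux (l+1) := by simp only [hux]; rw [hvl, hvl1]
  have hux_eq2 : ux (l+1) = ux (l+2) := by simp only [hux]; rw [hvl1, hvl2]
  have huz_eq : uz l = uz (l+1) := by simp only [huz]; rw [hvl, hvl1]
  have huz_eq2 : uz (l+1) = uz (l+2) := by simp only [huz]; rw [hvl1, hvl2]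
  set X1 := ∑ j ∈ Finset.Ico 1 l, (ux j - ux (j+1)) * (∑ i ∈ Finset.range j, Δp (1+i)) with hX1
  set X2 := ∑ j ∈ Finset.Ico (l+2) (N+4), (ux j - ux (j+1)) * (∑ i ∈ Finset.range j, Δp (1+i)) with hX2
  set Z1 := ∑ j ∈ Finset.Ico 1 l, (uz j - uz (j+1)) * (∑ i ∈ Finset.range j, Δp (1+i)) with hZ1
  set Z2 := ∑ j ∈ Finset.Ico (l+2) (N+4), (uz j - uz (j+1)) * (∑ i ∈ Finset.range j, Δp (1+i)) with hZ2
  have hxs : ∑ i ∈ Finset.Icc 1 (N+4), Δp i * ux i = X1 + X2 := hsplit ux hux_eq hux_eq2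
  have hzs : ∑ i ∈ Finset.Icc 1 (N+4), Δp i * uz i = Z1 + Z2 := hsplit uz huz_eq huz_eq2
  -- signs of the blocks
  have hX1n : X1 ≤ 0 := by
    apply Finset.sum_nonpos
    intro j hj
    have hj' := Finset.mem_Ico.mp hj
    exact mul_nonpos_of_nonneg_of_nonpos (hdx j (by omega) (by omega)) (hneg j (by omega))
  have hX2p : 0 ≤ X2 := by
    apply Finset.sum_nonneg
    intro j hj
    have hj' := Finset.mem_Ico.mp hj
    exact mul_nonneg (hdx j (by omega) (by omega)) (hpos j (by omega) (by omega))
  have hZ1p : 0 ≤ Z1 := by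
    apply Finset.sum_nonneg
    intro j hj
    have hj' := Finset.mem_Ico.mp hj
    have h1 := hdz j (by omega : 1 ≤ j) (by omega : j+1 ≤ N+4)
    have h2 := hneg j (by omega : j ≤ l - 1)
    have := mul_nonneg (by linarith : (0:ℝ) ≤ -(uz j - uz (j+1)))
      (by linarith : (0:ℝ) ≤ -(∑ i ∈ Finset.range j, Δp (1+i)))
    linarith [this]
  have hZ2n : Z2 ≤ 0 := by
    apply Finset.sum_nonpos
    intro j hj
    have hj' := Finset.mem_Ico.mp hj
    have h1 := hdz j (by omega : 1 ≤ j) (by omega : j+1 ≤ N+4)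
    have h2 := hpos j (by omega) (by omega)
    have := mul_nonneg (by linarith : (0:ℝ) ≤ -(uz j - uz (j+1))) h2
    linarith [this]
  -- the cross inequality at the level of sums : X1 * Z2 ≤ X2 * Z1
  have hXZ : X1 * Z2 ≤ X2 * Z1 := by
    rw [hX1, hX2, hZ1, hZ2, show (∑ j ∈ Finset.Ico (l+2) (N+4),
          (ux j - ux (j+1)) * (∑ i ∈ Finset.range j, Δp (1+i)))
        * (∑ j ∈ Finset.Ico 1 l, (uz j - uz (j+1)) * (∑ i ∈ Finset.range j, Δp (1+i)))
      = (∑ j ∈ Finset.Ico 1 l, (uz j - uz (j+1)) * (∑ i ∈ Finset.range j, Δp (1+i)))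
        * (∑ j ∈ Finset.Ico (l+2) (N+4), (ux j - ux (j+1)) * (∑ i ∈ Finset.range j, Δp (1+i)))
      from mul_comm _ _]
    rw [Finset.sum_mul_sum, Finset.sum_mul_sum]
    apply Finset.sum_le_sum
    intro j hj
    apply Finset.sum_le_sum
    intro j' hj'
    have hjm := Finset.mem_Ico.mp hj
    have hjm' := Finset.mem_Ico.mp hj'
    have hc := hcross j j' (by omega) (by omega) (by omega) (by omega)
    have hp : (0:ℝ) ≤ -(∑ i ∈ Finset.range j, Δp (1+i)) := by
      linarith [hneg j (by omega : j ≤ l - 1)]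
    have hq : (0:ℝ) ≤ ∑ i ∈ Finset.range j', Δp (1+i) :=
      hpos j' (by omega) (by omega)
    have hm := mul_le_mul_of_nonneg_left hc (mul_nonneg hp hq)
    linear_combination hm
  -- conclude
  by_contra hcon
  push_neg at hcon
  obtain ⟨hc1, hc2⟩ := hcon
  rw [show (∑ i ∈ Finset.Icc 1 (N+4), Δp i * fx |x - v i|)
      = ∑ i ∈ Finset.Icc 1 (N+4), Δp i * ux i from rfl, hxs] at hc1
  rw [show (∑ i ∈ Finset.Icc 1 (N+4), Δp i * fz |z - v i|)
      = ∑ i ∈ Finset.Icc 1 (N+4), Δp i * uz i from rfl, hzs] at hc2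
  have hZ2neg : (0:ℝ) < -Z2 := by linarith
  have k1 : X2 * (-Z2) < (-X1) * (-Z2) := by
    apply mul_lt_mul_of_pos_right _ hZ2neg
    linarith
  have k2 : X2 * Z1 ≤ X2 * (-Z2) := mul_le_mul_of_nonneg_left (by linarith) hX2p
  linarith [hXZ, k1, k2]
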